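/- Let H be a finite-dimensional reproducing kernel Hilbert space with kernel basis {k_x}. Then δ_H(x,y) := sqrt(1 - |⟨k_x,k_y⟩|²/(⟨k_x,k_x⟩⟨k_y,k_y⟩)) equals the operator norm ‖P_x - P_y‖, where P_x, P_y are the orthogonal projections onto the spans of k_x and k_y. -/

import Mathlib

open Submodule ContinuousLinearMap


/-- The orthogonal projection of a Hilbert space onto the span of a vector,
viewed as an operator on the whole space. -/
noncomputable def projOnSpan {H : Type*} [NormedAddCommGroup H] [InnerProductSpace ℂ H]
    [FiniteDimensional ℂ H] (v : H) : H →L[ℂ] H :=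
  (Submodule.span ℂ {v}).subtypeL.comp (Submodule.orthogonalProjection (Submodule.span ℂ {v}))

/-- For linearly independent kernel vectors `k_x, k_y` in a finite-dimensional RKHS,
`δ_H(x,y) = √(1 - |⟨k_x,k_y⟩|²/(⟨k_x,k_x⟩⟨k_y,k_y⟩))` equals the operator norm
`‖P_x - P_y‖` of the difference of the orthogonal projections onto their spans. -/
theorem deltaH_eq_norm_proj_sub {H : Type*} [NormedAddCommGroup H] [InnerProductSpace ℂ H]
    [FiniteDimensional ℂ H] (kx ky : H)
    (hind : LinearIndependent ℂ ![kx, ky]) :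
    Real.sqrt (1 - (‖(inner ℂ kx ky : ℂ)‖) ^ 2 / (‖kx‖ ^ 2 * ‖ky‖ ^ 2)) =
      ‖projOnSpan kx - projOnSpan ky‖ := by
  have _inst : CompleteSpace H := FiniteDimensional.complete ℂ H
  have hkx : kx ≠ 0 := by simpa using hind.ne_zero 0
  have hky : ky ≠ 0 := by simpa using hind.ne_zero 1
  have hkx' : (‖kx‖ : ℂ) ^ 2 ≠ 0 :=
    pow_ne_zero 2 (Complex.ofReal_ne_zero.mpr (norm_ne_zero_iff.mpr hkx))
  have hky' : (‖ky‖ : ℂ) ^ 2 ≠ 0 :=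
    pow_ne_zero 2 (Complex.ofReal_ne_zero.mpr (norm_ne_zero_iff.mpr hky))
  have hP : ∀ v w : H, projOnSpan v w = ((inner ℂ v w : ℂ) / ((‖v‖ : ℂ) ^ 2)) • v := by
    intro v w
    have := starProjection_singleton (𝕜 := ℂ) (v := v) w
    change (Submodule.span ℂ {v}).starProjection w = _
    rw [this]
    norm_cast
  set D : H →L[ℂ] H := projOnSpan kx - projOnSpan ky with hD
  set K : Submodule ℂ H := Submodule.span ℂ ({kx, ky} : Set H) with hK
  set R : H →L[ℂ] H := K.subtypeL.comp (orthogonalProjection K) with hR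
  set t : ℝ := 1 - (‖(inner ℂ kx ky : ℂ)‖) ^ 2 / (‖kx‖ ^ 2 * ‖ky‖ ^ 2) with ht
  have habs : (inner ℂ kx ky : ℂ) * (inner ℂ ky kx : ℂ)
      = (((‖(inner ℂ kx ky : ℂ)‖) ^ 2 : ℝ) : ℂ) := by
    rw [← inner_conj_symm ky kx, Complex.mul_conj']
    norm_cast
  have htC : ((t : ℝ) : ℂ)
      = 1 - (inner ℂ kx ky : ℂ) * (inner ℂ ky kx : ℂ) / ((‖kx‖ : ℂ) ^ 2 * (‖ky‖ : ℂ) ^ 2) := by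
    rw [habs, ht]
    push_cast
    ring
  have hDapp : ∀ w : H, D w = ((inner ℂ kx w : ℂ) / (‖kx‖ : ℂ) ^ 2) • kx
      - ((inner ℂ ky w : ℂ) / (‖ky‖ : ℂ) ^ 2) • ky := by
    intro w
    simp [hD, ContinuousLinearMap.sub_apply, hP]
  have hDDx : D (D kx) = ((t : ℝ) : ℂ) • kx := by
    simp only [hDapp, inner_sub_right, inner_smul_right, inner_self_eq_norm_sq_to_K,
      RCLike.ofReal_eq_complex_ofReal]
    rw [htC]
    match_scalars <;> field_simp [Complex.ofReal_ne_zero.mpr (norm_ne_zero_iff.mpr hkx), Complex.ofReal_ne_zero.mpr (norm_ne_zero_iff.mpr hky)] <;> ring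
  have hDDy : D (D ky) = ((t : ℝ) : ℂ) • ky := by
    simp only [hDapp, inner_sub_right, inner_smul_right, inner_self_eq_norm_sq_to_K,
      RCLike.ofReal_eq_complex_ofReal]
    rw [htC]
    match_scalars <;> field_simp [Complex.ofReal_ne_zero.mpr (norm_ne_zero_iff.mpr hkx), Complex.ofReal_ne_zero.mpr (norm_ne_zero_iff.mpr hky)] <;> ring
  have hbase : ∀ z ∈ K, D (D z) = ((t : ℝ) : ℂ) • z := by
    intro z hz
    induction hz using Submodule.span_induction with
    | mem u hu =>
      rcases hu with h | h
      · subst h; exact hDDx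
      · rw [Set.mem_singleton_iff] at h; subst h; exact hDDy
    | zero => simp
    | add u v _ _ hu hv => rw [map_add, map_add, hu, hv, smul_add]
    | smul a u _ hu => rw [map_smul, map_smul, hu, smul_comm]
  have hD2 : D * D = ((t : ℝ) : ℂ) • R := by
    ext w
    have hmem : (orthogonalProjection K w : H) ∈ K := (orthogonalProjection K w).2
    have hperp : w - (orthogonalProjection K w : H) ∈ Kᗮ :=
      Submodule.sub_starProjection_mem_orthogonal w
    have hx0 : (inner ℂ kx (w - (orthogonalProjection K w : H)) : ℂ) = 0 :=
      hperp kx (Submodule.subset_span (by simp))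
    have hy0 : (inner ℂ ky (w - (orthogonalProjection K w : H)) : ℂ) = 0 :=
      hperp ky (Submodule.subset_span (by simp))
    have hker : D (w - (orthogonalProjection K w : H)) = 0 := by
      rw [hDapp, hx0, hy0]; simp
    have hsplit : w = (orthogonalProjection K w : H) + (w - (orthogonalProjection K w : H)) := by
      abel
    calc (D * D) w = D (D ((orthogonalProjection K w : H)
          + (w - (orthogonalProjection K w : H)))) := by rw [← hsplit]; rfl
      _ = D (D (orthogonalProjection K w : H)) + D (D (w - (orthogonalProjection K w : H))) := by
          rw [map_add, map_add]
      _ = ((t : ℝ) : ℂ) • (orthogonalProjection K w : H) := by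
          rw [hbase _ hmem, hker, map_zero, add_zero]
      _ = (((t : ℝ) : ℂ) • R) w := rfl
  have hRkx : R kx = kx := by
    simp [hR, ContinuousLinearMap.comp_apply,
      starProjection_eq_self_iff.mpr (Submodule.subset_span (by simp : kx ∈ ({kx, ky} : Set H)))]
    rw [starProjection_eq_self_iff]
    exact Submodule.subset_span (by simp)
  have hRnorm : ‖R‖ = 1 := by
    apply le_antisymm
    · apply ContinuousLinearMap.opNorm_le_bound _ zero_le_one
      intro w
      rw [one_mul]
      calc ‖R w‖ = ‖orthogonalProjection K w‖ := rfl
        _ ≤ 1 * ‖w‖ := (orthogonalProjection K).le_opNorm w |>.trans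
            (by gcongr; exact orthogonalProjection_norm_le K)
        _ = ‖w‖ := one_mul _
    · have h := R.le_opNorm kx
      rw [hRkx] at h
      have hkxpos : 0 < ‖kx‖ := norm_pos_iff.mpr hkx
      nlinarith
  have ht0 : 0 ≤ t := by
    rw [ht]
    have hcs : ‖(inner ℂ kx ky : ℂ)‖ ≤ ‖kx‖ * ‖ky‖ := norm_inner_le_norm kx ky
    have : (‖(inner ℂ kx ky : ℂ)‖) ^ 2 ≤ ‖kx‖ ^ 2 * ‖ky‖ ^ 2 := by
      rw [← mul_pow]
      exact pow_le_pow_left₀ (by positivity) hcs 2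
    have hpos : (0:ℝ) < ‖kx‖ ^ 2 * ‖ky‖ ^ 2 := by
      have h1 := norm_pos_iff.mpr hkx
      have h2 := norm_pos_iff.mpr hky
      positivity
    rw [sub_nonneg, div_le_one hpos]
    exact this
  have hsa : IsSelfAdjoint D :=
    (isSelfAdjoint_starProjection (Submodule.span ℂ {kx})).sub
      (isSelfAdjoint_starProjection (Submodule.span ℂ {ky}))
  have hDD : ‖D‖ * ‖D‖ = t := by
    calc ‖D‖ * ‖D‖ = ‖star D * D‖ := (CStarRing.norm_star_mul_self).symm
      _ = ‖D * D‖ := by rw [hsa.star_eq]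
      _ = ‖((t : ℝ) : ℂ) • R‖ := by rw [hD2]
      _ = ‖((t : ℝ) : ℂ)‖ * ‖R‖ := norm_smul _ _
      _ = t := by rw [hRnorm, mul_one, Complex.norm_real, Real.norm_of_nonneg ht0]
  rw [← hDD, Real.sqrt_mul_self (norm_nonneg D)]
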